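/- For every β > 1: there exists a unique m⋆ ∈ (0,1) with tanh(β·m⋆) = m⋆; the set of real solutions of m = tanh(βm) is exactly {−m⋆, 0, m⋆}; the minimum of the Curie–Weiss free energy F_β over [−1,1] is attained exactly at the two points m⋆ and −m⋆ (and F_β(m⋆) = F_β(−m⋆)); and m = 0 is a strict local maximum of F_β, i.e. there is δ > 0 with F_β(m) < F_β(0) for all m ∈ (−δ,δ) with m ≠ 0. -/

import Mathlib

open Set

/-- The Curie–Weiss free energy `F_β(m)` (using that `Real.log 0 = 0` in Mathlib, so the
convention `0·log 0 = 0` is automatic). -/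
noncomputable def cwFreeEnergy (β m : ℝ) : ℝ :=
  -m ^ 2 / 2 + β⁻¹ *
    (((1 + m) / 2) * Real.log ((1 + m) / 2) + ((1 - m) / 2) * Real.log ((1 - m) / 2))


noncomputable def myAt (x : ℝ) : ℝ := Real.log ((1 + x) / (1 - x)) / 2

lemma tanh_formula (y : ℝ) :
    Real.tanh y = (Real.exp (2 * y) - 1) / (Real.exp (2 * y) + 1) := by
  have h := Real.exp_pos y
  have h2 : Real.exp (2 * y) = Real.exp y * Real.exp y := by
    rw [two_mul, Real.exp_add]
  rw [Real.tanh_eq_sinh_div_cosh, Real.sinh_eq, Real.cosh_eq, Real.exp_neg, h2]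
  have hpos : 0 < Real.exp y * Real.exp y + 1 := by positivity
  field_simp

lemma tanh_mem (y : ℝ) : Real.tanh y ∈ Ioo (-1 : ℝ) 1 := by
  have h := Real.exp_pos (2 * y)
  rw [tanh_formula]
  constructor
  · rw [lt_div_iff₀ (by linarith)]; linarith
  · rw [div_lt_one (by linarith)]; linarith

lemma myAt_tanh (y : ℝ) : myAt (Real.tanh y) = y := by
  have h := Real.exp_pos (2 * y)
  rw [tanh_formula, myAt]
  have key : (1 + (Real.exp (2 * y) - 1) / (Real.exp (2 * y) + 1)) /
      (1 - (Real.exp (2 * y) - 1) / (Real.exp (2 * y) + 1)) = Real.exp (2 * y) := by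
    rw [div_eq_iff]
    · field_simp
      ring
    · have : (1 : ℝ) - (Real.exp (2 * y) - 1) / (Real.exp (2 * y) + 1)
          = 2 / (Real.exp (2 * y) + 1) := by field_simp; ring
      rw [this]; positivity
  rw [key, Real.log_exp]; ring

lemma tanh_myAt {x : ℝ} (hx : x ∈ Ioo (-1 : ℝ) 1) : Real.tanh (myAt x) = x := by
  have h1 : (0:ℝ) < 1 + x := by linarith [hx.1]
  have h2 : (0:ℝ) < 1 - x := by linarith [hx.2]
  have hr : (0:ℝ) < (1 + x) / (1 - x) := by positivity
  rw [tanh_formula, myAt]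
  rw [show 2 * (Real.log ((1 + x) / (1 - x)) / 2) = Real.log ((1 + x) / (1 - x)) by ring,
    Real.exp_log hr]
  rw [div_eq_iff]
  · field_simp; ring
  · have : (1 + x) / (1 - x) + 1 = 2 / (1 - x) := by field_simp; ring
    rw [this]; positivity

lemma myAt_zero : myAt 0 = 0 := by simp [myAt]

lemma myAt_neg {x : ℝ} (hx : x ∈ Ioo (-1 : ℝ) 1) : myAt (-x) = -myAt x := by
  have h1 : (1:ℝ) + x ≠ 0 := by nlinarith [hx.1]
  have h2 : (1:ℝ) - x ≠ 0 := by nlinarith [hx.2]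
  rw [myAt, myAt, show (1 + -x) / (1 - -x) = ((1 + x) / (1 - x))⁻¹ by rw [show (1:ℝ) + -x = 1 - x by ring, show (1:ℝ) - -x = 1 + x by ring]; rw [inv_div],
    Real.log_inv]
  ring

lemma hasDerivAt_myAt {x : ℝ} (hx : x ∈ Ioo (-1 : ℝ) 1) :
    HasDerivAt myAt (1 / (1 - x ^ 2)) x := by
  have h1 : (0:ℝ) < 1 + x := by linarith [hx.1]
  have h2 : (0:ℝ) < 1 - x := by linarith [hx.2]
  have hA : HasDerivAt (fun y : ℝ => Real.log (1 + y)) (1 / (1 + x)) x := by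
    have := ((hasDerivAt_id x).const_add 1).log h1.ne'
    simpa using this
  have hB : HasDerivAt (fun y : ℝ => Real.log (1 - y)) (-1 / (1 - x)) x := by
    have h : HasDerivAt (fun y : ℝ => 1 - y) (-1) x := by
      simpa using (hasDerivAt_id x).const_sub 1
    have := h.log h2.ne'
    simpa using this
  have hg : HasDerivAt (fun y : ℝ => (Real.log (1 + y) - Real.log (1 - y)) / 2)
      ((1 / (1 + x) - -1 / (1 - x)) / 2) x := (hA.sub hB).div_const 2
  have heq : myAt =ᶠ[nhds x] fun y : ℝ => (Real.log (1 + y) - Real.log (1 - y)) / 2 := by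
    filter_upwards [Ioo_mem_nhds hx.1 hx.2] with y hy
    have hy1 : (0:ℝ) < 1 + y := by linarith [hy.1]
    have hy2 : (0:ℝ) < 1 - y := by linarith [hy.2]
    rw [myAt, Real.log_div hy1.ne' hy2.ne']
  have := hg.congr_of_eventuallyEq heq
  have hx2 : (1:ℝ) - x ^ 2 ≠ 0 := by nlinarith
  refine this.congr_deriv ?_
  field_simp
  ring

lemma continuousAt_myAt {x : ℝ} (hx : x ∈ Ioo (-1 : ℝ) 1) : ContinuousAt myAt x :=
  (hasDerivAt_myAt hx).continuousAt

/-- strict convexity evaluated between three points -/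
lemma strictConvexOn_between {s : Set ℝ} {f : ℝ → ℝ} (h : StrictConvexOn ℝ s f)
    {p q r : ℝ} (hp : p ∈ s) (hr : r ∈ s) (hpq : p < q) (hqr : q < r) :
    f q < (r - q) / (r - p) * f p + (q - p) / (r - p) * f r := by
  have hpr : p < r := hpq.trans hqr
  have hd : (0:ℝ) < r - p := by linarith
  have ha : (0:ℝ) < (r - q) / (r - p) := div_pos (by linarith) hd
  have hb : (0:ℝ) < (q - p) / (r - p) := div_pos (by linarith) hd
  have hab : (r - q) / (r - p) + (q - p) / (r - p) = 1 := by field_simp; ring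
  have := h.2 hp hr hpr.ne ha hb hab
  simp only [smul_eq_mul] at this
  have hq : (r - q) / (r - p) * p + (q - p) / (r - p) * r = q := by
    field_simp
    ring
  rwa [hq] at this
  
lemma u_strictConvexOn (β : ℝ) {z : ℝ} (hz0 : 0 < z) (hz1 : z < 1) :
    StrictConvexOn ℝ (Icc 0 z) (fun x => myAt x - β * x) := by
  apply StrictMonoOn.strictConvexOn_of_deriv (convex_Icc _ _)
  · intro x hx
    have hx' : x ∈ Ioo (-1:ℝ) 1 := ⟨by linarith [hx.1], by linarith [hx.2]⟩
    exact ((continuousAt_myAt hx').continuousWithinAt.sub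
      ((continuousOn_const.mul continuousOn_id) x hx))
  · rw [interior_Icc]
    have hderiv : ∀ x ∈ Ioo (0:ℝ) z,
        deriv (fun x => myAt x - β * x) x = 1 / (1 - x ^ 2) - β := by
      intro x hx
      have hx' : x ∈ Ioo (-1:ℝ) 1 := ⟨by linarith [hx.1], by linarith [hx.2]⟩
      have : HasDerivAt (fun x => myAt x - β * x) (1 / (1 - x ^ 2) - β) x := by
        have hlin : HasDerivAt (fun x : ℝ => β * x) β x := by
          simpa using (hasDerivAt_id x).const_mul β
        exact (hasDerivAt_myAt hx').sub hlin
      exact this.deriv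
    intro a ha b hb hab
    rw [hderiv a ha, hderiv b hb]
    have h1 : (0:ℝ) < 1 - b ^ 2 := by nlinarith [hb.1, hb.2]
    have h2 : (1:ℝ) - b ^ 2 < 1 - a ^ 2 := by nlinarith [ha.1]
    have := one_div_lt_one_div_of_lt h1 h2
    linarith

lemma myAt_le {x : ℝ} (hx : x ∈ Ioo (0:ℝ) 1) : myAt x ≤ x / (1 - x) := by
  have h2 : (0:ℝ) < 1 - x := by linarith [hx.2]
  have hr : (0:ℝ) < (1 + x) / (1 - x) := div_pos (by linarith [hx.1]) h2
  have hlog := Real.log_le_sub_one_of_pos hr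
  have heq : (1 + x) / (1 - x) - 1 = 2 * x / (1 - x) := by field_simp; ring
  rw [heq] at hlog
  rw [myAt, show x / (1 - x) = (2 * x / (1 - x)) / 2 by ring]
  linarith

lemma myAt_tanh' (y : ℝ) : myAt (Real.tanh y) = y := by
  have h := Real.exp_pos (2 * y)
  have hform : Real.tanh y = (Real.exp (2 * y) - 1) / (Real.exp (2 * y) + 1) := by
    have h2 : Real.exp (2 * y) = Real.exp y * Real.exp y := by rw [two_mul, Real.exp_add]
    have hy := Real.exp_pos y
    rw [Real.tanh_eq_sinh_div_cosh, Real.sinh_eq, Real.cosh_eq, Real.exp_neg, h2]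
    have hpos : 0 < Real.exp y * Real.exp y + 1 := by positivity
    field_simp
  rw [hform, myAt]
  have key : (1 + (Real.exp (2 * y) - 1) / (Real.exp (2 * y) + 1)) /
      (1 - (Real.exp (2 * y) - 1) / (Real.exp (2 * y) + 1)) = Real.exp (2 * y) := by
    rw [div_eq_iff]
    · field_simp; ring
    · have : (1 : ℝ) - (Real.exp (2 * y) - 1) / (Real.exp (2 * y) + 1)
          = 2 / (Real.exp (2 * y) + 1) := by field_simp; ring
      rw [this]; positivity
  rw [key, Real.log_exp]; ring

lemma exists_root {β : ℝ} (hβ : 1 < β) : ∃ c ∈ Ioo (0:ℝ) 1, myAt c = β * c := by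
  have hβ0 : (0:ℝ) < β := by linarith
  set g : ℝ → ℝ := fun x => myAt x - β * x with hg
  -- first point: strictly negative
  set m1 : ℝ := (β - 1) / (2 * β) with hm1
  have hm1mem : m1 ∈ Ioo (0:ℝ) 1 := by
    constructor
    · apply div_pos <;> linarith
    · rw [div_lt_one (by linarith)]; linarith
  have h2β : (2 * β) ≠ 0 := by positivity
  have h1m1 : 1 - m1 = (β + 1) / (2 * β) := by
    rw [hm1, eq_div_iff h2β, sub_mul, one_mul, div_mul_cancel₀ _ h2β]; ring
  have hg1 : g m1 < 0 := by
    have hle := myAt_le hm1mem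
    have heq : m1 / (1 - m1) = (β - 1) / (β + 1) := by
      rw [h1m1, hm1]
      rw [div_div_div_eq]
      rw [div_eq_div_iff (by positivity) (by positivity)]
      ring
    have hlt : (β - 1) / (β + 1) < β * m1 := by
      rw [hm1, show β * ((β - 1) / (2 * β)) = (β - 1) / 2 by field_simp]
      rw [div_lt_div_iff₀ (by linarith) (by norm_num)]
      nlinarith
    simp only [hg]
    rw [heq] at hle
    linarith
  -- second point: strictly positive
  set m2 : ℝ := Real.tanh (β + 1) with hm2
  have hm2mem : m2 ∈ Ioo (0:ℝ) 1 := by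
    constructor
    · have hform : Real.tanh (β + 1) =
          (Real.exp (2 * (β + 1)) - 1) / (Real.exp (2 * (β + 1)) + 1) := tanh_formula _
      have hgt : (1:ℝ) < Real.exp (2 * (β + 1)) := by
        nlinarith [Real.add_one_le_exp (2 * (β + 1)), Real.exp_pos (2 * (β + 1))]
      rw [hm2, hform]
      apply div_pos <;> linarith
    · exact (tanh_mem (β + 1)).2
  have hg2 : 0 < g m2 := by
    simp only [hg, hm2, myAt_tanh']
    nlinarith [(tanh_mem (β + 1)).2, hm2mem.1]
  -- IVT
  have hsub : uIcc m1 m2 ⊆ Ioo (0:ℝ) 1 := by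
    intro x hx
    rcases mem_uIcc.mp hx with ⟨h, h'⟩ | ⟨h, h'⟩ <;>
      exact ⟨by linarith [hm1mem.1, hm2mem.1], by linarith [hm1mem.2, hm2mem.2]⟩
  have hcont : ContinuousOn g (uIcc m1 m2) := by
    intro x hx
    have hx' : x ∈ Ioo (-1:ℝ) 1 := ⟨by linarith [(hsub hx).1], (hsub hx).2⟩
    exact ((continuousAt_myAt hx').sub ((continuous_const.mul continuous_id).continuousAt)).continuousWithinAt
  have h0 : (0:ℝ) ∈ uIcc (g m1) (g m2) := mem_uIcc.mpr (Or.inl ⟨hg1.le, hg2.le⟩)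
  obtain ⟨c, hc, hc0⟩ := intermediate_value_uIcc hcont h0
  exact ⟨c, hsub hc, by simpa [hg, sub_eq_zero] using hc0⟩

lemma root_unique {β : ℝ} (hβ : 1 < β) {a b : ℝ} (ha : a ∈ Ioo (0:ℝ) 1)
    (hb : b ∈ Ioo (0:ℝ) 1) (hra : myAt a = β * a) (hrb : myAt b = β * b) : a = b := by
  -- wlog a < b
  have key : ∀ x y : ℝ, x ∈ Ioo (0:ℝ) 1 → y ∈ Ioo (0:ℝ) 1 → myAt x = β * x →
      myAt y = β * y → x < y → False := by
    intro x y hx hy hrx hry hxy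
    have hconv := u_strictConvexOn β hy.1 hy.2
    have := strictConvexOn_between hconv (p := 0) (q := x) (r := y)
      (left_mem_Icc.mpr hy.1.le) (right_mem_Icc.mpr hy.1.le) hx.1 hxy
    simp only [myAt_zero] at this
    rw [hrx, hry] at this
    have h1 : β * x - β * x = 0 := by ring
    have h2 : β * y - β * y = 0 := by ring
    rw [h1, h2] at this
    simp at this
  rcases lt_trichotomy a b with h | h | h
  · exact absurd (key a b ha hb hra hrb h) (by simp)
  · exact h
  · exact absurd (key b a hb ha hrb hra h) (by simp)

lemma usign_neg {β : ℝ} (hβ : 1 < β) {ms : ℝ} (hms : ms ∈ Ioo (0:ℝ) 1)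
    (hr : myAt ms = β * ms) {x : ℝ} (hx0 : 0 < x) (hxm : x < ms) : myAt x < β * x := by
  have hconv := u_strictConvexOn β hms.1 hms.2
  have := strictConvexOn_between hconv (p := 0) (q := x) (r := ms)
    (left_mem_Icc.mpr hms.1.le) (right_mem_Icc.mpr hms.1.le) hx0 hxm
  simp only [myAt_zero] at this
  rw [hr] at this
  have h2 : β * ms - β * ms = 0 := by ring
  rw [h2] at this
  simp at this
  linarith

lemma usign_pos {β : ℝ} (hβ : 1 < β) {ms : ℝ} (hms : ms ∈ Ioo (0:ℝ) 1)
    (hr : myAt ms = β * ms) {x : ℝ} (hx0 : ms < x) (hx1 : x < 1) : β * x < myAt x := by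
  have hconv := u_strictConvexOn β (hms.1.trans hx0) hx1
  have := strictConvexOn_between hconv (p := 0) (q := ms) (r := x)
    (left_mem_Icc.mpr (hms.1.trans hx0).le) (right_mem_Icc.mpr (hms.1.trans hx0).le)
    hms.1 hx0
  simp only [myAt_zero] at this
  rw [hr] at this
  have h2 : β * ms - β * ms = 0 := by ring
  rw [h2] at this
  simp only [sub_zero, mul_zero, zero_add] at this
  -- this : 0 < (ms - 0)/(x - 0) * (myAt x - β * x)
  have hc : (0:ℝ) < ms / x := div_pos hms.1 (hms.1.trans hx0)
  rcases mul_pos_iff.mp this with ⟨_, h⟩ | ⟨h, _⟩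
  · linarith
  · linarith

lemma cw_even (β m : ℝ) : cwFreeEnergy β (-m) = cwFreeEnergy β m := by
  unfold cwFreeEnergy
  rw [show (1 + -m) = (1 - m) by ring, show (1 - -m) = (1 + m) by ring]
  ring

lemma cw_continuous (β : ℝ) : Continuous (cwFreeEnergy β) := by
  unfold cwFreeEnergy
  have h1 : Continuous fun m : ℝ => (1 + m) / 2 := by continuity
  have h2 : Continuous fun m : ℝ => (1 - m) / 2 := by continuity
  exact ((continuous_pow 2).neg.div_const 2).add
    (continuous_const.mul ((Real.continuous_mul_log.comp h1).add
      (Real.continuous_mul_log.comp h2)))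

lemma cw_hasDerivAt (β : ℝ) {m : ℝ} (hm : m ∈ Ioo (-1:ℝ) 1) :
    HasDerivAt (cwFreeEnergy β) (-m + β⁻¹ * myAt m) m := by
  have h1 : (0:ℝ) < 1 + m := by linarith [hm.1]
  have h2 : (0:ℝ) < 1 - m := by linarith [hm.2]
  have h1' : ((1 + m) / 2 : ℝ) ≠ 0 := by positivity
  have h2' : ((1 - m) / 2 : ℝ) ≠ 0 := by positivity
  have hf : HasDerivAt (fun y : ℝ => (1 + y) / 2) (1/2) m := by
    simpa using (((hasDerivAt_id m).const_add 1).div_const 2)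
  have hg : HasDerivAt (fun y : ℝ => (1 - y) / 2) (-(1/2)) m := by
    have h : HasDerivAt (fun y : ℝ => 1 - y) (-1) m := by
      simpa using (hasDerivAt_id m).const_sub 1
    have := h.div_const 2
    rw [show (-(1/2):ℝ) = -1/2 by norm_num]
    exact this
  have hA : HasDerivAt (fun y : ℝ => ((1 + y)/2) * Real.log ((1 + y)/2))
      ((Real.log ((1 + m)/2) + 1) * (1/2)) m :=
    by have := (Real.hasDerivAt_mul_log h1').comp m hf; exact this
  have hB : HasDerivAt (fun y : ℝ => ((1 - y)/2) * Real.log ((1 - y)/2))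
      ((Real.log ((1 - m)/2) + 1) * (-(1/2))) m :=
    by have := (Real.hasDerivAt_mul_log h2').comp m hg; exact this
  have hq : HasDerivAt (fun y : ℝ => -y ^ 2 / 2) (-(↑2 * m ^ 1) / 2) m :=
    ((hasDerivAt_pow 2 m).neg).div_const 2
  have total := hq.add ((hA.add hB).const_mul β⁻¹)
  have hAt : myAt m = (Real.log ((1 + m)/2) - Real.log ((1 - m)/2)) / 2 := by
    have hdd : ((1 + m)/2) / ((1 - m)/2) = (1 + m) / (1 - m) := by
      rw [div_div_div_eq, div_eq_div_iff (by positivity) h2.ne']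
      ring
    rw [myAt, ← hdd, Real.log_div h1' h2']
  refine HasDerivAt.congr_deriv (f := cwFreeEnergy β) total ?_
  rw [hAt]
  push_cast
  ring

lemma cw_deriv (β : ℝ) {m : ℝ} (hm : m ∈ Ioo (-1:ℝ) 1) :
    deriv (cwFreeEnergy β) m = -m + β⁻¹ * myAt m := (cw_hasDerivAt β hm).deriv

lemma cw_anti {β : ℝ} (hβ : 1 < β) {ms : ℝ} (hms : ms ∈ Ioo (0:ℝ) 1)
    (hr : myAt ms = β * ms) : StrictAntiOn (cwFreeEnergy β) (Icc 0 ms) := by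
  have hβ0 : (0:ℝ) < β := by linarith
  apply strictAntiOn_of_deriv_neg (convex_Icc _ _) (cw_continuous β).continuousOn
  intro x hx
  rw [interior_Icc] at hx
  have hx' : x ∈ Ioo (-1:ℝ) 1 := ⟨by linarith [hx.1], by linarith [hx.2, hms.2]⟩
  rw [cw_deriv β hx']
  have hu := usign_neg hβ hms hr hx.1 hx.2
  have h3 : β⁻¹ * myAt x < β⁻¹ * (β * x) := by
    apply mul_lt_mul_of_pos_left hu (inv_pos.mpr hβ0)
  have h4 : β⁻¹ * (β * x) = x := by field_simp
  linarith

lemma cw_mono {β : ℝ} (hβ : 1 < β) {ms : ℝ} (hms : ms ∈ Ioo (0:ℝ) 1)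
    (hr : myAt ms = β * ms) : StrictMonoOn (cwFreeEnergy β) (Icc ms 1) := by
  have hβ0 : (0:ℝ) < β := by linarith
  apply strictMonoOn_of_deriv_pos (convex_Icc _ _) (cw_continuous β).continuousOn
  intro x hx
  rw [interior_Icc] at hx
  have hx' : x ∈ Ioo (-1:ℝ) 1 := ⟨by linarith [hx.1, hms.1], hx.2⟩
  rw [cw_deriv β hx']
  have hu := usign_pos hβ hms hr hx.1 hx.2
  have h3 : β⁻¹ * (β * x) < β⁻¹ * myAt x := by
    apply mul_lt_mul_of_pos_left hu (inv_pos.mpr hβ0)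
  have h4 : β⁻¹ * (β * x) = x := by field_simp
  linarith

lemma cw_min {β : ℝ} (hβ : 1 < β) {ms : ℝ} (hms : ms ∈ Ioo (0:ℝ) 1)
    (hr : myAt ms = β * ms) {m : ℝ} (hm : m ∈ Icc (0:ℝ) 1) (hne : m ≠ ms) :
    cwFreeEnergy β ms < cwFreeEnergy β m := by
  rcases lt_or_gt_of_ne hne with h | h
  · exact cw_anti hβ hms hr ⟨hm.1, h.le⟩ (right_mem_Icc.mpr hms.1.le) h
  · exact cw_mono hβ hms hr (left_mem_Icc.mpr hms.2.le) ⟨h.le, hm.2⟩ h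


/-- For `β > 1` there is a unique `m⋆ ∈ (0,1)` with `tanh (β m⋆) = m⋆`; the
set of real solutions of `m = tanh (β m)` is exactly `{-m⋆, 0, m⋆}`; the minimum of `F_β`
on `[-1,1]` is attained exactly at `±m⋆` (with equal values); and `0` is a strict local
maximum of `F_β`. -/
theorem curie_weiss_supercritical (β : ℝ) (hβ : 1 < β) :
    ∃ mstar : ℝ, mstar ∈ Ioo (0 : ℝ) 1 ∧ Real.tanh (β * mstar) = mstar ∧
      (∀ m ∈ Ioo (0 : ℝ) 1, Real.tanh (β * m) = m → m = mstar) ∧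
      {m : ℝ | Real.tanh (β * m) = m} = {-mstar, 0, mstar} ∧
      (∀ m ∈ Icc (-1 : ℝ) 1, cwFreeEnergy β mstar ≤ cwFreeEnergy β m) ∧
      (∀ m ∈ Icc (-1 : ℝ) 1, cwFreeEnergy β m = cwFreeEnergy β mstar →
        m = mstar ∨ m = -mstar) ∧
      cwFreeEnergy β mstar = cwFreeEnergy β (-mstar) ∧
      ∃ δ > (0 : ℝ), ∀ m ∈ Ioo (-δ) δ, m ≠ 0 → cwFreeEnergy β m < cwFreeEnergy β 0 := by
  obtain ⟨ms, hms, hroot⟩ := exists_root hβ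
  have hms1 : ms ∈ Ioo (-1:ℝ) 1 := ⟨by linarith [hms.1], hms.2⟩
  have hfix : Real.tanh (β * ms) = ms := by rw [← hroot, tanh_myAt hms1]
  have huniq : ∀ m ∈ Ioo (0:ℝ) 1, Real.tanh (β * m) = m → m = ms := by
    intro m hm htanh
    have hAt := myAt_tanh' (β * m)
    rw [htanh] at hAt
    exact root_unique hβ hm hms hAt hroot
  refine ⟨ms, hms, hfix, huniq, ?_, ?_, ?_, (cw_even β ms).symm, ?_⟩
  · -- solution set
    ext m
    simp only [mem_setOf_eq, mem_insert_iff, mem_singleton_iff]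
    constructor
    · intro h
      have hmem : m ∈ Ioo (-1:ℝ) 1 := h ▸ tanh_mem (β * m)
      have hAt := myAt_tanh' (β * m)
      rw [h] at hAt
      rcases lt_trichotomy m 0 with h0 | h0 | h0
      · left
        have hnm : -m ∈ Ioo (0:ℝ) 1 := ⟨by linarith, by linarith [hmem.1]⟩
        have hAt' : myAt (-m) = β * (-m) := by
          rw [myAt_neg hmem, hAt]; ring
        have := root_unique hβ hnm hms hAt' hroot
        linarith
      · right; left; exact h0
      · right; right; exact huniq m ⟨h0, hmem.2⟩ h
    · rintro (rfl | rfl | rfl)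
      · rw [mul_neg, Real.tanh_neg, hfix]
      · rw [mul_zero, Real.tanh_zero]
      · exact hfix
  · -- global minimum
    intro m hm
    rcases le_or_gt 0 m with h0 | h0
    · rcases eq_or_ne m ms with rfl | hne
      · exact le_refl _
      · exact (cw_min hβ hms hroot ⟨h0, hm.2⟩ hne).le
    · rw [← cw_even β m]
      rcases eq_or_ne (-m) ms with hme | hne
      · rw [hme]
      · exact (cw_min hβ hms hroot ⟨by linarith, by linarith [hm.1]⟩ hne).le
  · -- equality cases
    intro m hm heq
    rcases le_or_gt 0 m with h0 | h0
    · left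
      by_contra hne
      exact absurd heq (ne_of_gt (cw_min hβ hms hroot ⟨h0, hm.2⟩ hne))
    · right
      by_contra hne
      have hne' : -m ≠ ms := fun hc => hne (by linarith)
      have heq' : cwFreeEnergy β (-m) = cwFreeEnergy β ms := by
        rw [cw_even]; exact heq
      exact absurd heq' (ne_of_gt (cw_min hβ hms hroot
        ⟨by linarith, by linarith [hm.1]⟩ hne'))
  · -- strict local max at 0
    refine ⟨ms, hms.1, ?_⟩
    intro m hm hne
    have h0mem : (0:ℝ) ∈ Icc (0:ℝ) ms := ⟨le_refl 0, hms.1.le⟩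
    rcases lt_or_gt_of_ne hne with h | h
    · rw [← cw_even β m]
      exact cw_anti hβ hms hroot h0mem ⟨by linarith, by linarith [hm.1]⟩ (by linarith)
    · exact cw_anti hβ hms hroot h0mem ⟨h.le, hm.2.le⟩ h
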